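/- For points x, y in a topological space X, if x ∈ e*-cl_θ({y}) then y ∈ e*-cl_θ({x}). -/
import Mathlib


open Set Topology

variable {X : Type*} [TopologicalSpace X]

/-- δ-closure of A. -/
def deltaCl (A : Set X) : Set X :=
  {x | ∀ U : Set X, IsOpen U → x ∈ U → (interior (closure U) ∩ A).Nonempty}

/-- A is e*-open if A ⊆ cl(int(δ-cl A)). -/
def EStarOpen (A : Set X) : Prop := A ⊆ closure (interior (deltaCl A))

/-- A is e*-closed if its complement is e*-open. -/
def EStarClosed (A : Set X) : Prop := EStarOpen Aᶜ

/-- e*-closure: intersection of all e*-closed supersets. -/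
def eStarCl (A : Set X) : Set X := ⋂₀ {F | EStarClosed F ∧ A ⊆ F}

/-- e*-interior: union of all e*-open subsets. -/
def eStarInt (A : Set X) : Set X := ⋃₀ {U | EStarOpen U ∧ U ⊆ A}

/-- e*-regular: both e*-open and e*-closed. -/
def EStarRegular (A : Set X) : Prop := EStarOpen A ∧ EStarClosed A

/-- e*-θ-closure. -/
def eStarClTheta (A : Set X) : Set X :=
  {x | ∀ U : Set X, EStarOpen U → x ∈ U → (eStarCl U ∩ A).Nonempty}

/-- e*-θ-closed. -/
def EStarThetaClosed (A : Set X) : Prop := A = eStarClTheta A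

/-- e*-θ-open. -/
def EStarThetaOpen (A : Set X) : Prop := EStarThetaClosed Aᶜ

/-- quasi e*-θ-closed. -/
def QEStarThetaClosed (A : Set X) : Prop :=
  ∀ U : Set X, EStarThetaOpen U → A ⊆ U → eStarClTheta A ⊆ U

/-- e*-θ-kernel. -/
def eStarKerTheta (A : Set X) : Set X := ⋂₀ {U | EStarThetaOpen U ∧ A ⊆ U}


lemma deltaCl_mono {A B : Set X} (hAB : A ⊆ B) : deltaCl A ⊆ deltaCl B := by
  intro x hx U hU hxU
  obtain ⟨z, hz1, hz2⟩ := hx U hU hxU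
  exact ⟨z, hz1, hAB hz2⟩

lemma eStarOpen_sUnion {S : Set (Set X)} (hS : ∀ U ∈ S, EStarOpen U) :
    EStarOpen (⋃₀ S) := by
  intro x hx
  obtain ⟨U, hU, hxU⟩ := hx
  have h1 : U ⊆ closure (interior (deltaCl U)) := hS U hU
  have h2 : deltaCl U ⊆ deltaCl (⋃₀ S) := deltaCl_mono (subset_sUnion_of_mem hU)
  exact closure_mono (interior_mono h2) (h1 hxU)

lemma eStarClosed_eStarCl (A : Set X) : EStarClosed (eStarCl A) := by
  unfold EStarClosed eStarCl
  rw [compl_sInter]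
  apply eStarOpen_sUnion
  rintro U ⟨F, ⟨hF, -⟩, rfl⟩
  exact hF

lemma subset_eStarCl (A : Set X) : A ⊆ eStarCl A := by
  intro a ha F hF
  exact hF.2 ha

lemma eStarCl_subset {A F : Set X} (hF : EStarClosed F) (hAF : A ⊆ F) :
    eStarCl A ⊆ F := fun _ hx => hx F ⟨hF, hAF⟩

theorem stmt14 (x y : X) (h : x ∈ eStarClTheta {y}) : y ∈ eStarClTheta {x} := by
  intro V hV hyV
  by_contra hne
  have hx : x ∉ eStarCl V := by
    intro hx
    exact hne ⟨x, hx, rfl⟩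
  have hU : EStarOpen (eStarCl V)ᶜ := eStarClosed_eStarCl V
  obtain ⟨z, hz1, hz2⟩ := h (eStarCl V)ᶜ hU hx
  rw [Set.mem_singleton_iff] at hz2
  subst hz2
  have hVc : EStarClosed Vᶜ := by
    have : EStarOpen V := hV
    simpa [EStarClosed] using this
  have hsub : (eStarCl V)ᶜ ⊆ Vᶜ := compl_subset_compl.mpr (subset_eStarCl V)
  exact eStarCl_subset hVc hsub hz1 hyV
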